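/- There exists a unique Z ∈ R with Z − z ∈ t·R such that Z = z·exp( σ·((q_s·Z^s + t·Q̃(Z))^d − q_s^d·z^{s·d}) ). Moreover, this Z satisfies Z − z ∈ K⟦z^{−1}⟧⟦t⟧, i.e. for every l ≥ 0 the coefficient of t^l in Z − z is a formal power series in z^{−1} (has no positive powers of z). -/

import Mathlib

/-!
STATEMENT 8.  Exponentiated form of the characterization of the first
deformation family (Section 3): with `L = K((z⁻¹))` the field of formal Laurent
series in `z⁻¹` and `R = L⟦t⟧`, there is a unique `Z ∈ R` with `Z − z ∈ t·R`
such that `Z = z·exp(σ·((q_s·Z^s + t·Q̃(Z))^d − q_s^d·z^{s·d}))`; moreover every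
coefficient of `t^l` in `Z − z` lies in `K⟦z⁻¹⟧ ⊆ L`.

We realize `L` as `LaurentSeries K` with variable `z⁻¹` (so `z` is the Hahn
series supported at `−1`, and `K⟦z⁻¹⟧` is the range of
`HahnSeries.ofPowerSeries ℤ K`), and `R` as `PowerSeries L` with variable `t`.
For `h ∈ t·R`, `exp h = Σ_n h^n/n!` is computed coefficientwise (the `n ≤ m`
truncation computes the coefficient of `t^m` since `h^n ∈ t^n·R`).
-/

open PowerSeries

/-- The formal exponential on `L⟦t⟧`, intended for arguments in `t·L⟦t⟧`. -/
noncomputable def pexpL (L : Type*) [Field L] (F : PowerSeries L) : PowerSeries L :=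
  PowerSeries.mk fun n =>
    ∑ k ∈ Finset.range (n + 1), ((k.factorial : L))⁻¹ * PowerSeries.coeff (R := L) n (F ^ k)

/-- The element `z = (z⁻¹)⁻¹` of `L = K((z⁻¹))`. -/
noncomputable def zElem (K : Type*) [Field K] : LaurentSeries K :=
  HahnSeries.single (-1 : ℤ) (1 : K)

/-- The canonical map `K → R = L⟦t⟧`. -/
noncomputable def cK (K : Type*) [Field K] : K →+* PowerSeries (LaurentSeries K) :=
  (PowerSeries.C (R := LaurentSeries K)).comp HahnSeries.C

namespace St8

variable {S : Type*} [CommRing S]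

/-- agreement of coefficients up to index `n` -/
def agree (n : ℕ) (U V : PowerSeries S) : Prop := ∀ m ≤ n, coeff (R := S) m U = coeff (R := S) m V

theorem agree.refl (n : ℕ) (U : PowerSeries S) : agree n U U := fun _ _ => rfl

theorem agree.symm {n : ℕ} {U V : PowerSeries S} (h : agree n U V) : agree n V U :=
  fun m hm => (h m hm).symm

theorem agree.trans {n : ℕ} {U V W : PowerSeries S} (h : agree n U V) (h' : agree n V W) :
    agree n U W := fun m hm => (h m hm).trans (h' m hm)

theorem agree.add {n : ℕ} {U V U' V' : PowerSeries S} (h : agree n U U') (h' : agree n V V') :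
    agree n (U + V) (U' + V') := fun m hm => by
  simp only [map_add, h m hm, h' m hm]

theorem agree.neg {n : ℕ} {U U' : PowerSeries S} (h : agree n U U') :
    agree n (-U) (-U') := fun m hm => by
  simp only [map_neg, h m hm]

theorem agree.sub {n : ℕ} {U V U' V' : PowerSeries S} (h : agree n U U') (h' : agree n V V') :
    agree n (U - V) (U' - V') := by
  simpa [sub_eq_add_neg] using h.add h'.neg

theorem agree.mul {n : ℕ} {U V U' V' : PowerSeries S} (h : agree n U U') (h' : agree n V V') :
    agree n (U * V) (U' * V') := fun m hm => by
  rw [coeff_mul, coeff_mul]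
  refine Finset.sum_congr rfl fun p hp => ?_
  rw [Finset.HasAntidiagonal.mem_antidiagonal] at hp
  rw [h p.1 (le_trans (by omega) hm), h' p.2 (le_trans (by omega) hm)]

theorem agree.pow {n : ℕ} {U U' : PowerSeries S} (h : agree n U U') (k : ℕ) :
    agree n (U ^ k) (U' ^ k) := by
  induction k with
  | zero => simpa using agree.refl n 1
  | succ k ih => rw [pow_succ, pow_succ]; exact ih.mul h

theorem agree.smul {n : ℕ} {U U' : PowerSeries S} (h : agree n U U') (k : ℕ) :
    agree n (k • U) (k • U') := fun m hm => by
  simp only [map_nsmul, h m hm]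

theorem agree.sum {n : ℕ} {ι : Type*} (t : Finset ι) (f g : ι → PowerSeries S)
    (h : ∀ j ∈ t, agree n (f j) (g j)) :
    agree n (∑ j ∈ t, f j) (∑ j ∈ t, g j) := fun m hm => by
  rw [map_sum, map_sum]
  exact Finset.sum_congr rfl fun j hj => h j hj m hm

theorem agree.X_mul {n : ℕ} {U U' : PowerSeries S} (h : agree n U U') :
    agree n (X * U) (X * U') := fun m hm => by
  cases m with
  | zero => simp
  | succ k => rw [coeff_succ_X_mul, coeff_succ_X_mul, h k (by omega)]

theorem agree.constantCoeff {n : ℕ} {U U' : PowerSeries S} (h : agree n U U') :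
    PowerSeries.constantCoeff (R := S) U = PowerSeries.constantCoeff (R := S) U' := by
  simpa [coeff_zero_eq_constantCoeff] using h 0 (Nat.zero_le n)



section pexp

variable {L : Type*} [Field L]

theorem coeff_pexpL (F : PowerSeries L) (n : ℕ) :
    coeff (R := L) n (pexpL L F) =
      ∑ k ∈ Finset.range (n + 1), ((k.factorial : L))⁻¹ * coeff (R := L) n (F ^ k) :=
  coeff_mk _ _

theorem coeff_zero_pexpL (F : PowerSeries L) : coeff (R := L) 0 (pexpL L F) = 1 := by
  simp [coeff_pexpL]

theorem coeff_pow_eq_zero {F : PowerSeries L} (hF : constantCoeff (R := L) F = 0)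
    {m k : ℕ} (hmk : m < k) : coeff (R := L) m (F ^ k) = 0 := by
  have hdvd : (X : PowerSeries L) ^ k ∣ F ^ k :=
    pow_dvd_pow_of_dvd (X_dvd_iff.mpr hF) k
  exact X_pow_dvd_iff.mp hdvd m hmk

/-- coefficient of `pexpL F` as a sum with any larger range, when `F(0)=0` -/
theorem coeff_pexpL_eq {F : PowerSeries L} (hF : constantCoeff (R := L) F = 0) {n N : ℕ}
    (hnN : n ≤ N) :
    coeff (R := L) n (pexpL L F) =
      ∑ k ∈ Finset.range (N + 1), ((k.factorial : L))⁻¹ * coeff (R := L) n (F ^ k) := by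
  rw [coeff_pexpL]
  refine Finset.sum_subset (by intro x hx; simp at hx ⊢; omega) fun k hk hk' => ?_
  simp only [Finset.mem_range] at hk hk'
  rw [coeff_pow_eq_zero hF (by omega), mul_zero]

theorem agree_pexpL {n : ℕ} {U V : PowerSeries L} (h : agree n U V) :
    agree n (pexpL L U) (pexpL L V) := fun m hm => by
  rw [coeff_pexpL, coeff_pexpL]
  exact Finset.sum_congr rfl fun k _ => by rw [(h.pow k) m hm]

/-- partial sums of the exponential series -/
noncomputable def pS (F : PowerSeries L) (N : ℕ) : PowerSeries L :=
  ∑ k ∈ Finset.range (N + 1), PowerSeries.C (R := L) ((k.factorial : L))⁻¹ * F ^ k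

theorem coeff_pS (F : PowerSeries L) (N n : ℕ) :
    coeff (R := L) n (pS F N) =
      ∑ k ∈ Finset.range (N + 1), ((k.factorial : L))⁻¹ * coeff (R := L) n (F ^ k) := by
  rw [pS, map_sum]
  exact Finset.sum_congr rfl fun k _ => coeff_C_mul _ _ _

theorem coeff_pexpL_eq_pS {F : PowerSeries L} (hF : constantCoeff (R := L) F = 0) {n N : ℕ}
    (hnN : n ≤ N) : coeff (R := L) n (pexpL L F) = coeff (R := L) n (pS F N) := by
  rw [coeff_pS, coeff_pexpL_eq hF hnN]

theorem deriv_pS [CharZero L] (F : PowerSeries L) (n : ℕ) :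
    d⁄dX L (pS F (n + 1)) = d⁄dX L F * pS F n := by
  rw [pS, map_sum]
  rw [Finset.sum_range_succ']
  simp only [pow_zero, mul_one, Derivation.map_one_eq_zero, smul_eq_mul, mul_zero,
    derivative_C, add_zero]
  have : ∀ k : ℕ, d⁄dX L (PowerSeries.C (R := L) (((k+1).factorial : L))⁻¹ * F ^ (k+1)) =
      d⁄dX L F * (PowerSeries.C (R := L) ((k.factorial : L))⁻¹ * F ^ k) := by
    intro k
    rw [Derivation.leibniz, derivative_C, smul_zero, add_zero]
    rw [Derivation.leibniz_pow]
    simp only [smul_eq_mul, Nat.add_sub_cancel]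
    have hfac : (((k+1).factorial : L))⁻¹ * ((k:L) + 1) = ((k.factorial : L))⁻¹ := by
      rw [Nat.factorial_succ]
      push_cast
      rw [mul_inv]
      have h1 : ((k:L) + 1) ≠ 0 := by
        have := Nat.cast_add_one_ne_zero (R := L) k
        simpa using this
      rw [mul_comm ((k:L)+1)⁻¹ _, mul_assoc, inv_mul_cancel₀ h1, mul_one]
    calc PowerSeries.C (R := L) (((k+1).factorial : L))⁻¹ * ((k + 1 : ℕ) • (F ^ k * d⁄dX L F))
        = (PowerSeries.C (R := L) (((k+1).factorial : L))⁻¹ * ((k:PowerSeries L) + 1)) *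
            (F ^ k * d⁄dX L F) := by
          rw [nsmul_eq_mul]; push_cast; ring
      _ = PowerSeries.C (R := L) ((k.factorial : L))⁻¹ * (F ^ k * d⁄dX L F) := by
          congr 1
          rw [show ((k:PowerSeries L) + 1) = PowerSeries.C (R := L) ((k:L) + 1) by
              rw [map_add, map_one, map_natCast],
            ← map_mul, hfac]
      _ = d⁄dX L F * (PowerSeries.C (R := L) ((k.factorial : L))⁻¹ * F ^ k) := by ring
  rw [Finset.sum_congr rfl fun k _ => this k, ← Finset.mul_sum]
  rfl

theorem deriv_pexpL [CharZero L] {F : PowerSeries L} (hF : constantCoeff (R := L) F = 0) :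
    d⁄dX L (pexpL L F) = d⁄dX L F * pexpL L F := by
  ext n
  rw [coeff_derivative, coeff_pexpL_eq_pS hF (le_refl (n+1)),
    show coeff (R := L) (n+1) (pS F (n+1)) * ((n:L) + 1) = coeff (R := L) n (d⁄dX L (pS F (n+1))) from
      (coeff_derivative _ _).symm, deriv_pS]
  rw [coeff_mul, coeff_mul]
  refine Finset.sum_congr rfl fun p hp => ?_
  rw [Finset.HasAntidiagonal.mem_antidiagonal] at hp
  rw [coeff_pexpL_eq_pS hF (show p.2 ≤ n by omega)]

end pexp


section pertsec

variable {S : Type*} [CommRing S]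

/-- `U'` agrees with `U` up to coefficient `n`, except coefficient `n` is increased by `c`. -/
def pert (n : ℕ) (c : S) (U U' : PowerSeries S) : Prop :=
  agree n U' (U + PowerSeries.C (R := S) c * X ^ n)

theorem pert.coeff_eq {n : ℕ} {c : S} {U U' : PowerSeries S} (h : pert n c U U')
    {m : ℕ} (hm : m ≤ n) :
    coeff (R := S) m U' = coeff (R := S) m U + (if m = n then c else 0) := by
  rw [h m hm, map_add, coeff_C_mul_X_pow]

theorem pert.of_coeff {n : ℕ} {c : S} {U U' : PowerSeries S}
    (h : ∀ m ≤ n, coeff (R := S) m U' = coeff (R := S) m U + (if m = n then c else 0)) :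
    pert n c U U' := fun m hm => by
  rw [h m hm, map_add, coeff_C_mul_X_pow]

theorem pert.refl (n : ℕ) (U : PowerSeries S) : pert n (0 : S) U U :=
  pert.of_coeff fun m _ => by simp

theorem pert.self (n : ℕ) (c : S) (U : PowerSeries S) :
    pert n c U (U + PowerSeries.C (R := S) c * X ^ n) := agree.refl _ _

theorem pert.add {n : ℕ} {c e : S} {U U' V V' : PowerSeries S}
    (h : pert n c U U') (h' : pert n e V V') : pert n (c + e) (U + V) (U' + V') :=
  pert.of_coeff fun m hm => by
    rw [map_add, map_add, h.coeff_eq hm, h'.coeff_eq hm]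
    split <;> ring

theorem pert.sub_const {n : ℕ} {c : S} {U U' : PowerSeries S} (E : PowerSeries S)
    (h : pert n c U U') : pert n c (U - E) (U' - E) :=
  pert.of_coeff fun m hm => by
    rw [map_sub, map_sub, h.coeff_eq hm]
    split <;> ring

theorem pert.mul {n : ℕ} (hn : n ≠ 0) {c e : S} {U U' V V' : PowerSeries S}
    (h : pert n c U U') (h' : pert n e V V') :
    pert n (c * PowerSeries.constantCoeff (R := S) V + PowerSeries.constantCoeff (R := S) U * e)
      (U * V) (U' * V') := by
  refine (agree.mul h h').trans ?_
  intro m hm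
  have expand : (U + PowerSeries.C (R := S) c * X ^ n) * (V + PowerSeries.C (R := S) e * X ^ n)
      = U * V + (PowerSeries.C (R := S) c * V + PowerSeries.C (R := S) e * U) * X ^ n
        + (PowerSeries.C (R := S) c * PowerSeries.C (R := S) e) * X ^ (n + n) := by
    rw [pow_add]; ring
  rw [expand, map_add, map_add, map_add, coeff_mul_X_pow', coeff_mul_X_pow',
    coeff_C_mul_X_pow]
  have h2n : ¬ (n + n ≤ m) := by omega
  rw [if_neg h2n, add_zero]
  by_cases hmn : m = n
  · subst hmn
    rw [if_pos (le_refl m), if_pos rfl, Nat.sub_self]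
    simp only [map_add, coeff_zero_eq_constantCoeff, map_mul, constantCoeff_C]
    ring_nf
  · have : ¬ (n ≤ m) := by omega
    rw [if_neg this, if_neg hmn]

theorem pert.pow {n : ℕ} (hn : n ≠ 0) {c : S} {U U' : PowerSeries S}
    (h : pert n c U U') (k : ℕ) :
    pert n ((k : S) * (PowerSeries.constantCoeff (R := S) U) ^ (k - 1) * c) (U ^ k) (U' ^ k) := by
  induction k with
  | zero => simpa using pert.refl n 1
  | succ k ih =>
      have hmul := pert.mul hn ih h
      rw [pow_succ, pow_succ]
      convert hmul using 1
      rw [map_pow]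
      rcases k with _ | j
      · simp
      · rw [Nat.succ_sub_one, Nat.succ_sub_one]
        push_cast
        rw [pow_succ]
        ring

theorem pert.X_mul {n : ℕ} {c : S} {U U' : PowerSeries S} (h : pert n c U U') :
    pert n (0 : S) (X * U) (X * U') :=
  pert.of_coeff fun m hm => by
    cases m with
    | zero => simp
    | succ k =>
        rw [coeff_succ_X_mul, coeff_succ_X_mul, h.coeff_eq (show k ≤ n by omega),
          if_neg (show ¬ k = n by omega)]
        simp

theorem pert.sum {n : ℕ} {ι : Type*} (t : Finset ι) (γ : ι → S)
    (f g : ι → PowerSeries S) (h : ∀ j ∈ t, pert n (γ j) (f j) (g j)) :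
    pert n (∑ j ∈ t, γ j) (∑ j ∈ t, f j) (∑ j ∈ t, g j) :=
  pert.of_coeff fun m hm => by
    rw [map_sum, map_sum, Finset.sum_congr rfl fun j hj => (h j hj).coeff_eq hm,
      Finset.sum_add_distrib]
    congr 1
    split <;> simp

end pertsec

section pertexp

variable {L : Type*} [Field L]

theorem pert.pexp {n : ℕ} (hn : n ≠ 0) {c : L} {U U' : PowerSeries L}
    (hU0 : PowerSeries.constantCoeff (R := L) U = 0) (h : pert n c U U') :
    pert n c (pexpL L U) (pexpL L U') := by
  refine (agree_pexpL h).trans ?_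
  intro m hm
  have base := pert.self n c U
  rw [coeff_pexpL, map_add, coeff_C_mul_X_pow, coeff_pexpL,
    Finset.sum_congr rfl fun k (_ : k ∈ Finset.range (m+1)) => by
      rw [(base.pow hn k).coeff_eq hm, mul_add]]
  rw [Finset.sum_add_distrib]
  congr 1
  by_cases hmn : m = n
  · rw [if_pos hmn]
    subst hmn
    rw [Finset.sum_congr rfl fun k (_ : k ∈ Finset.range (m+1)) => by rw [if_pos rfl]]
    refine (Finset.sum_eq_single 1 (fun k _ hk1 => ?_) (fun h1 => ?_)).trans ?_
    · rcases k with _ | j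
      · simp
      · rw [hU0, zero_pow (show j + 1 - 1 ≠ 0 by omega)]
        ring
    · exact absurd (Finset.mem_range.mpr (by omega)) h1
    · simp [hU0]
  · rw [if_neg hmn]
    rw [Finset.sum_congr rfl fun k (_ : k ∈ Finset.range (m+1)) => by rw [if_neg hmn]]
    simp

end pertexp

section bo

variable {K : Type*} [Field K]

/-- all coefficients of index `< m` vanish, i.e. `m ≤ order` (or `x = 0`). -/
def bo (m : ℤ) (x : LaurentSeries K) : Prop := ∀ i : ℤ, i < m → x.coeff i = 0

theorem bo_zero (m : ℤ) : bo m (0 : LaurentSeries K) := fun _ _ => rfl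

theorem bo.mono {m m' : ℤ} {x : LaurentSeries K} (h : bo m x) (hm : m' ≤ m) : bo m' x :=
  fun i hi => h i (lt_of_lt_of_le hi hm)

theorem bo_iff_le_order {m : ℤ} {x : LaurentSeries K} (hx : x ≠ 0) :
    bo m x ↔ m ≤ x.order := by
  constructor
  · intro h
    by_contra hlt
    exact (mt HahnSeries.coeff_order_eq_zero.mp hx) (h _ (not_le.mp hlt))
  · intro h i hi
    exact HahnSeries.coeff_eq_zero_of_lt_order (lt_of_lt_of_le hi h)

theorem bo.mul {m m' : ℤ} {x y : LaurentSeries K} (h : bo m x) (h' : bo m' y) :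
    bo (m + m') (x * y) := by
  by_cases hx : x = 0
  · subst hx; simpa using bo_zero _
  by_cases hy : y = 0
  · subst hy; simpa using bo_zero _
  rw [bo_iff_le_order (mul_ne_zero hx hy), HahnSeries.order_mul hx hy]
  exact add_le_add ((bo_iff_le_order hx).mp h) ((bo_iff_le_order hy).mp h')

theorem bo.add {m : ℤ} {x y : LaurentSeries K} (h : bo m x) (h' : bo m y) :
    bo m (x + y) := fun i hi => by
  rw [HahnSeries.coeff_add, h i hi, h' i hi, add_zero]

theorem bo.neg {m : ℤ} {x : LaurentSeries K} (h : bo m x) : bo m (-x) := fun i hi => by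
  rw [HahnSeries.coeff_neg, h i hi, neg_zero]

theorem bo.sub {m : ℤ} {x y : LaurentSeries K} (h : bo m x) (h' : bo m y) :
    bo m (x - y) := by
  rw [sub_eq_add_neg]; exact h.add h'.neg

theorem bo.sum {m : ℤ} {ι : Type*} (t : Finset ι) (f : ι → LaurentSeries K)
    (h : ∀ j ∈ t, bo m (f j)) : bo m (∑ j ∈ t, f j) :=
  Finset.sum_induction f (bo m) (fun _ _ ha hb => ha.add hb) (bo_zero m) h

theorem bo_single (a : ℤ) (r : K) : bo a (HahnSeries.single a r) := fun i hi => by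
  rw [HahnSeries.coeff_single_of_ne (by omega)]

theorem bo_C (r : K) : bo 0 (HahnSeries.C r : LaurentSeries K) := bo_single 0 r

theorem bo_one : bo 0 (1 : LaurentSeries K) := bo_C 1

theorem bo_natCast (k : ℕ) : bo 0 ((k : LaurentSeries K)) := by
  rw [show ((k : LaurentSeries K)) = HahnSeries.C (k : K) from (map_natCast _ k).symm]
  exact bo_C _

theorem bo.nsmul {m : ℤ} {x : LaurentSeries K} (h : bo m x) (k : ℕ) : bo m (k • x) := by
  rw [nsmul_eq_mul]
  simpa using (bo_natCast (K := K) k).mul h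

theorem bo.pow {m : ℤ} {x : LaurentSeries K} (h : bo m x) (k : ℕ) :
    bo ((k : ℤ) * m) (x ^ k) := by
  induction k with
  | zero => simpa using bo_one
  | succ k ih =>
      rw [pow_succ]
      have := ih.mul h
      rwa [show (k : ℤ) * m + m = ((k : ℤ) + 1) * m by ring, show ((k:ℤ)+1) = ((k+1 : ℕ) : ℤ)
        by push_cast; ring] at this

theorem order_le_of_coeff_ne_zero {x : LaurentSeries K} {g : ℤ} (h : x.coeff g ≠ 0) :
    x.order ≤ g := by
  by_contra hlt
  exact h (HahnSeries.coeff_eq_zero_of_lt_order (not_le.mp hlt))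

theorem bo_inv {x : LaurentSeries K} {e : ℤ} (hx : x ≠ 0) (h : x.order ≤ e) :
    bo (-e) x⁻¹ := by
  have hinv : x⁻¹ ≠ 0 := inv_ne_zero hx
  rw [bo_iff_le_order hinv]
  have : (x * x⁻¹).order = x.order + x⁻¹.order := HahnSeries.order_mul hx hinv
  rw [mul_inv_cancel₀ hx, HahnSeries.order_one] at this
  omega

theorem mem_range_ofPowerSeries {x : LaurentSeries K} (h : bo 0 x) :
    x ∈ Set.range (HahnSeries.ofPowerSeries ℤ K) := by
  refine ⟨PowerSeries.mk fun n => x.coeff (n : ℤ), ?_⟩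
  ext i
  rcases le_or_gt 0 i with hi | hi
  · obtain ⟨n, rfl⟩ := Int.eq_ofNat_of_zero_le hi
    rw [HahnSeries.ofPowerSeries_apply_coeff, coeff_mk]
  · rw [h i hi, HahnSeries.ofPowerSeries_apply]
    refine HahnSeries.embDomain_notin_range ?_
    rintro ⟨n, hn⟩
    change ((n:ℕ):ℤ) = i at hn
    omega

end bo

section wcl

variable {K : Type*} [Field K]

/-- uniform bound: every `t`-coefficient has `z⁻¹`-order at least `c`. -/
def ucl (c : ℤ) (U : PowerSeries (LaurentSeries K)) : Prop :=
  ∀ m : ℕ, bo c (PowerSeries.coeff (R := LaurentSeries K) m U)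

/-- weighted bound: constant `t`-coefficient has order `≥ a`, others `≥ a+1`. -/
def wcl (a : ℤ) (U : PowerSeries (LaurentSeries K)) : Prop :=
  bo a (PowerSeries.coeff (R := LaurentSeries K) 0 U) ∧
    ∀ m : ℕ, m ≠ 0 → bo (a + 1) (PowerSeries.coeff (R := LaurentSeries K) m U)

theorem ucl.mono {c c' : ℤ} {U : PowerSeries (LaurentSeries K)} (h : ucl c U) (hc : c' ≤ c) :
    ucl c' U := fun m => (h m).mono hc

theorem wcl.ucl {a : ℤ} {U : PowerSeries (LaurentSeries K)} (h : wcl a U) : ucl a U := by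
  intro m
  rcases Nat.eq_zero_or_pos m with hm | hm
  · subst hm; exact h.1
  · exact (h.2 m (by omega)).mono (by omega)

theorem wcl.mono {a a' : ℤ} {U : PowerSeries (LaurentSeries K)} (h : wcl a U) (ha : a' ≤ a) :
    wcl a' U := ⟨h.1.mono ha, fun m hm => (h.2 m hm).mono (by omega)⟩

theorem wcl.add {a : ℤ} {U V : PowerSeries (LaurentSeries K)} (h : wcl a U) (h' : wcl a V) :
    wcl a (U + V) := by
  constructor
  · rw [map_add]; exact h.1.add h'.1
  · intro m hm; rw [map_add]; exact (h.2 m hm).add (h'.2 m hm)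

theorem wcl_zero (a : ℤ) : wcl a (0 : PowerSeries (LaurentSeries K)) :=
  ⟨by rw [map_zero]; exact bo_zero a, fun m _ => by rw [map_zero]; exact bo_zero _⟩

theorem wcl_one : wcl 0 (1 : PowerSeries (LaurentSeries K)) := by
  constructor
  · rw [coeff_zero_eq_constantCoeff, map_one]; exact bo_one
  · intro m hm
    rw [PowerSeries.coeff_one, if_neg hm]
    exact bo_zero _

theorem wcl.mul {a b : ℤ} {U V : PowerSeries (LaurentSeries K)} (h : wcl a U) (h' : wcl b V) :
    wcl (a + b) (U * V) := by
  constructor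
  · have : PowerSeries.coeff (R := LaurentSeries K) 0 (U * V) =
        PowerSeries.coeff (R := LaurentSeries K) 0 U * PowerSeries.coeff (R := LaurentSeries K) 0 V := by
      rw [coeff_zero_eq_constantCoeff_apply, coeff_zero_eq_constantCoeff_apply,
        coeff_zero_eq_constantCoeff_apply, map_mul]
    rw [this]
    exact (h.1.mul h'.1)
  · intro m hm
    rw [PowerSeries.coeff_mul]
    refine bo.sum _ _ fun p hp => ?_
    rw [Finset.HasAntidiagonal.mem_antidiagonal] at hp
    by_cases h1 : p.1 = 0
    · have h2 : p.2 ≠ 0 := by omega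
      have := h.1.mul (h'.2 p.2 h2)
      rw [h1]
      exact this.mono (by omega)
    · have := (h.2 p.1 h1).mul (h'.ucl p.2)
      exact this.mono (by omega)

theorem wcl.pow {a : ℤ} {U : PowerSeries (LaurentSeries K)} (h : wcl a U) (k : ℕ) :
    wcl ((k : ℤ) * a) (U ^ k) := by
  induction k with
  | zero => simpa using wcl_one
  | succ k ih =>
      rw [pow_succ]
      have := ih.mul h
      refine this.mono (le_of_eq (by push_cast; ring))

theorem wcl.nsmul {a : ℤ} {U : PowerSeries (LaurentSeries K)} (h : wcl a U) (k : ℕ) :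
    wcl a (k • U) :=
  ⟨by rw [map_nsmul]; exact h.1.nsmul k, fun m hm => by
    rw [map_nsmul]; exact (h.2 m hm).nsmul k⟩

theorem wcl.sum {a : ℤ} {ι : Type*} (t : Finset ι) (f : ι → PowerSeries (LaurentSeries K))
    (h : ∀ j ∈ t, wcl a (f j)) : wcl a (∑ j ∈ t, f j) :=
  Finset.sum_induction f (wcl a) (fun _ _ hx hy => hx.add hy) (wcl_zero a) h

theorem wcl_C {a : ℤ} {x : LaurentSeries K} (h : bo a x) :
    wcl a (PowerSeries.C (R := LaurentSeries K) x) := by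
  constructor
  · rw [coeff_zero_eq_constantCoeff, constantCoeff_C]; exact h
  · intro m hm
    rw [PowerSeries.coeff_C, if_neg hm]
    exact bo_zero _

theorem ucl.X_mul {c : ℤ} {U : PowerSeries (LaurentSeries K)} (h : ucl c U) :
    ucl c (X * U) := by
  intro m
  cases m with
  | zero => simpa using bo_zero c
  | succ k => rw [coeff_succ_X_mul]; exact h k

theorem wcl.add_ucl {a : ℤ} {U V : PowerSeries (LaurentSeries K)} (h : wcl a U)
    (h' : St8.ucl (a + 1) V) : wcl a (U + V) := by
  constructor
  · rw [map_add]
    exact h.1.add ((h' 0).mono (by omega))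
  · intro m hm
    rw [map_add]
    exact (h.2 m hm).add (h' m)

end wcl

section fixed

variable {L : Type*} [Field L]

/-- truncation below `n` -/
noncomputable def ptrunc (n : ℕ) (W : PowerSeries L) : PowerSeries L :=
  PowerSeries.mk fun i => if i < n then PowerSeries.coeff (R := L) i W else 0

noncomputable def solSeq (Φ : PowerSeries L → PowerSeries L) (z0 lam : L) : ℕ → L
  | 0 => z0
  | n+1 => (1 - lam)⁻¹ *
      PowerSeries.coeff (R := L) (n+1)
        (Φ (PowerSeries.mk fun i => if h : i < n+1 then solSeq Φ z0 lam i else 0))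
decreasing_by exact h

variable {Φ : PowerSeries L → PowerSeries L} {z0 lam : L}

theorem coeff_phi_eq
    (hloc : ∀ n (W W' : PowerSeries L), agree n W W' → agree n (Φ W) (Φ W'))
    (hpert : ∀ n, n ≠ 0 → ∀ (W : PowerSeries L) (a : L),
      PowerSeries.constantCoeff (R := L) W = z0 →
      pert n (lam * a) (Φ W) (Φ (W + PowerSeries.C (R := L) a * X ^ n)))
    {n : ℕ} (hn : n ≠ 0) (W : PowerSeries L) (hW0 : PowerSeries.constantCoeff (R := L) W = z0) :
    PowerSeries.coeff (R := L) n (Φ W) =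
      PowerSeries.coeff (R := L) n (Φ (ptrunc n W)) + lam * PowerSeries.coeff (R := L) n W := by
  have hag : agree n W (ptrunc n W + PowerSeries.C (R := L) (PowerSeries.coeff (R := L) n W) * X ^ n) := by
    intro m hm
    rw [map_add, coeff_C_mul_X_pow, ptrunc, coeff_mk]
    rcases lt_or_eq_of_le hm with hlt | heq
    · rw [if_pos hlt, if_neg (by omega), add_zero]
    · rw [if_neg (by omega), if_pos heq, zero_add, heq]
  have hT0 : PowerSeries.constantCoeff (R := L) (ptrunc n W) = z0 := by
    rw [← coeff_zero_eq_constantCoeff_apply, ptrunc, coeff_mk, if_pos (by omega),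
      coeff_zero_eq_constantCoeff_apply, hW0]
  have h1 : PowerSeries.coeff (R := L) n (Φ W) =
      PowerSeries.coeff (R := L) n
        (Φ (ptrunc n W + PowerSeries.C (R := L) (PowerSeries.coeff (R := L) n W) * X ^ n)) :=
    hloc n _ _ hag n (le_refl n)
  rw [h1, (hpert n hn (ptrunc n W) _ hT0).coeff_eq (le_refl n), if_pos rfl]

theorem fixed_point_exists_unique
    (hlam : (1 : L) - lam ≠ 0)
    (hloc : ∀ n (W W' : PowerSeries L), agree n W W' → agree n (Φ W) (Φ W'))
    (h0 : ∀ W, PowerSeries.coeff (R := L) 0 (Φ W) = z0)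
    (hpert : ∀ n, n ≠ 0 → ∀ (W : PowerSeries L) (a : L),
      PowerSeries.constantCoeff (R := L) W = z0 →
      pert n (lam * a) (Φ W) (Φ (W + PowerSeries.C (R := L) a * X ^ n))) :
    ∃! Z : PowerSeries L, PowerSeries.constantCoeff (R := L) Z = z0 ∧ Z = Φ Z := by
  -- uniqueness
  have huniq : ∀ Z Z' : PowerSeries L,
      (PowerSeries.constantCoeff (R := L) Z = z0 ∧ Z = Φ Z) →
      (PowerSeries.constantCoeff (R := L) Z' = z0 ∧ Z' = Φ Z') → Z = Z' := by
    rintro Z Z' ⟨hZ0, hZe⟩ ⟨hZ0', hZe'⟩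
    ext n
    induction n using Nat.strong_induction_on with
    | _ n ih =>
      rcases Nat.eq_zero_or_pos n with rfl | hn
      · rw [coeff_zero_eq_constantCoeff_apply, coeff_zero_eq_constantCoeff_apply, hZ0, hZ0']
      · have hTeq : ptrunc n Z = ptrunc n Z' := by
          ext i
          rw [ptrunc, ptrunc, coeff_mk, coeff_mk]
          by_cases hi : i < n
          · rw [if_pos hi, if_pos hi, ih i hi]
          · rw [if_neg hi, if_neg hi]
        have e1 : PowerSeries.coeff (R := L) n Z =
            PowerSeries.coeff (R := L) n (Φ (ptrunc n Z)) + lam * PowerSeries.coeff (R := L) n Z := by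
          nth_rewrite 1 [hZe]
          exact coeff_phi_eq hloc hpert (by omega) Z hZ0
        have e2 : PowerSeries.coeff (R := L) n Z' =
            PowerSeries.coeff (R := L) n (Φ (ptrunc n Z)) + lam * PowerSeries.coeff (R := L) n Z' := by
          nth_rewrite 1 [hZe']
          rw [hTeq]
          exact coeff_phi_eq hloc hpert (by omega) Z' hZ0'
        have e3 : (1 - lam) * PowerSeries.coeff (R := L) n Z =
            (1 - lam) * PowerSeries.coeff (R := L) n Z' := by
          linear_combination e1 - e2
        exact mul_left_cancel₀ hlam e3
  -- existence
  set f : ℕ → L := solSeq Φ z0 lam with hf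
  set Zs : PowerSeries L := PowerSeries.mk f with hZs
  have hZs0 : PowerSeries.constantCoeff (R := L) Zs = z0 := by
    rw [← coeff_zero_eq_constantCoeff_apply, hZs, coeff_mk, hf, solSeq]
  have htr : ∀ n : ℕ, ptrunc n Zs = PowerSeries.mk fun i => if h : i < n then f i else 0 := by
    intro n
    ext i
    rw [ptrunc, coeff_mk, coeff_mk, coeff_mk, dite_eq_ite]
  have hfix : Zs = Φ Zs := by
    ext n
    rcases Nat.eq_zero_or_pos n with rfl | hn
    · rw [coeff_mk, h0, hf, solSeq]
    · obtain ⟨m, rfl⟩ := Nat.exists_eq_succ_of_ne_zero (by omega : n ≠ 0)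
      have hrec : f (m+1) = (1 - lam)⁻¹ *
          PowerSeries.coeff (R := L) (m+1) (Φ (ptrunc (m+1) Zs)) := by
        rw [htr, hf]
        rw [solSeq]
      have := coeff_phi_eq hloc hpert (show m+1 ≠ 0 by omega) Zs hZs0
      rw [hZs, coeff_mk] at this ⊢
      rw [this, ← hZs, hrec]
      field_simp
      ring
  exact ⟨Zs, ⟨hZs0, hfix⟩, fun y hy => huniq y Zs hy ⟨hZs0, hfix⟩⟩

end fixed

end St8


open St8

section ops

variable (K : Type*) [Field K] (s d : ℕ) (q : ℕ → K) (σ : K)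

noncomputable def zC : PowerSeries (LaurentSeries K) :=
  PowerSeries.C (R := LaurentSeries K) (zElem K)

noncomputable def QtF (Y : PowerSeries (LaurentSeries K)) : PowerSeries (LaurentSeries K) :=
  ∑ j ∈ Finset.Icc 1 (s - 1), cK K (q j) * Y ^ j

noncomputable def PF (W : PowerSeries (LaurentSeries K)) : PowerSeries (LaurentSeries K) :=
  cK K (q s) * W ^ s + PowerSeries.X * QtF K s q W

noncomputable def FFX (W : PowerSeries (LaurentSeries K)) : PowerSeries (LaurentSeries K) :=
  cK K σ * (PF K s q W ^ d - cK K (q s) ^ d * zC K ^ (s * d))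

noncomputable def PhiF (W : PowerSeries (LaurentSeries K)) : PowerSeries (LaurentSeries K) :=
  zC K * pexpL (LaurentSeries K) (FFX K s d q σ W)

noncomputable def QdF (W : PowerSeries (LaurentSeries K)) : PowerSeries (LaurentSeries K) :=
  ∑ j ∈ Finset.Icc 1 (s - 1),
    cK K (q j) * ((j : PowerSeries (LaurentSeries K)) * W ^ j)

noncomputable def AF (W : PowerSeries (LaurentSeries K)) : PowerSeries (LaurentSeries K) :=
  cK K σ * ((d : PowerSeries (LaurentSeries K)) *
    (PF K s q W ^ (d - 1) *
      (cK K (q s) * ((s : PowerSeries (LaurentSeries K)) * W ^ s) +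
        PowerSeries.X * QdF K s q W)))

noncomputable def BF (W : PowerSeries (LaurentSeries K)) : PowerSeries (LaurentSeries K) :=
  cK K σ * ((d : PowerSeries (LaurentSeries K)) *
    (PF K s q W ^ (d - 1) * (W * QtF K s q W)))

end ops

section opslemmas

variable {K : Type*} [Field K] {s d : ℕ} {q : ℕ → K} {σ : K}

/-- the distinguished element z₀ -/
local notation "z0" => zElem K

theorem lcharZero [CharZero K] : CharZero (LaurentSeries K) :=
  ⟨fun m n h => by
    have h2 := congrArg (fun x : LaurentSeries K => x.coeff 0) h
    rw [← map_natCast (HahnSeries.C (R := K)) m, ← map_natCast (HahnSeries.C (R := K)) n,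
      HahnSeries.C_apply, HahnSeries.C_apply, HahnSeries.coeff_single_same,
      HahnSeries.coeff_single_same] at h2
    exact Nat.cast_injective h2⟩

theorem ccCK (x : K) :
    PowerSeries.constantCoeff (R := LaurentSeries K) (cK K x) = HahnSeries.C x :=
  PowerSeries.constantCoeff_C _

theorem cczC : PowerSeries.constantCoeff (R := LaurentSeries K) (zC K) = z0 :=
  PowerSeries.constantCoeff_C _

theorem ccPF {W : PowerSeries (LaurentSeries K)}
    (hW : PowerSeries.constantCoeff (R := LaurentSeries K) W = z0) :
    PowerSeries.constantCoeff (R := LaurentSeries K) (PF K s q W) =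
      HahnSeries.C (q s) * z0 ^ s := by
  rw [PF, map_add, map_mul, map_mul, PowerSeries.constantCoeff_X, zero_mul, add_zero,
    map_pow, hW, ccCK]

theorem ccFFX {W : PowerSeries (LaurentSeries K)}
    (hW : PowerSeries.constantCoeff (R := LaurentSeries K) W = z0) :
    PowerSeries.constantCoeff (R := LaurentSeries K) (FFX K s d q σ W) = 0 := by
  rw [FFX, map_mul, map_sub, map_pow, ccPF hW, map_mul, map_pow, map_pow, cczC]
  simp only [ccCK]
  rw [mul_pow, ← pow_mul, sub_self, mul_zero]

theorem agreeQtF {n : ℕ} {W W' : PowerSeries (LaurentSeries K)} (h : agree n W W') :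
    agree n (QtF K s q W) (QtF K s q W') := by
  rw [QtF, QtF]
  exact agree.sum _ _ _ fun j _ => agree.mul (agree.refl n _) (h.pow j)

theorem agreeQdF {n : ℕ} {W W' : PowerSeries (LaurentSeries K)} (h : agree n W W') :
    agree n (QdF K s q W) (QdF K s q W') := by
  rw [QdF, QdF]
  exact agree.sum _ _ _ fun j _ =>
    agree.mul (agree.refl n _) (agree.mul (agree.refl n _) (h.pow j))

theorem agreePF {n : ℕ} {W W' : PowerSeries (LaurentSeries K)} (h : agree n W W') :
    agree n (PF K s q W) (PF K s q W') := by
  rw [PF, PF]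
  exact (agree.mul (agree.refl n _) (h.pow s)).add (agreeQtF h).X_mul

theorem agreeFFX {n : ℕ} {W W' : PowerSeries (LaurentSeries K)} (h : agree n W W') :
    agree n (FFX K s d q σ W) (FFX K s d q σ W') := by
  rw [FFX, FFX]
  exact agree.mul (agree.refl n _) (((agreePF h).pow d).sub (agree.refl n _))

theorem agreePhiF {n : ℕ} {W W' : PowerSeries (LaurentSeries K)} (h : agree n W W') :
    agree n (PhiF K s d q σ W) (PhiF K s d q σ W') := by
  rw [PhiF, PhiF]
  exact agree.mul (agree.refl n _) (agree_pexpL (agreeFFX h))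

theorem agreeAF {n : ℕ} {W W' : PowerSeries (LaurentSeries K)} (h : agree n W W') :
    agree n (AF K s d q σ W) (AF K s d q σ W') := by
  rw [AF, AF]
  refine agree.mul (agree.refl n _) (agree.mul (agree.refl n _)
    (agree.mul ((agreePF h).pow (d-1)) ?_))
  exact (agree.mul (agree.refl n _) (agree.mul (agree.refl n _) (h.pow s))).add
    (agreeQdF h).X_mul

theorem agreeBF {n : ℕ} {W W' : PowerSeries (LaurentSeries K)} (h : agree n W W') :
    agree n (BF K s d q σ W) (BF K s d q σ W') := by
  rw [BF, BF]
  exact agree.mul (agree.refl n _) (agree.mul (agree.refl n _)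
    (agree.mul ((agreePF h).pow (d-1)) (h.mul (agreeQtF h))))

theorem coeff0PhiF (W : PowerSeries (LaurentSeries K)) :
    PowerSeries.coeff (R := LaurentSeries K) 0 (PhiF K s d q σ W) = z0 := by
  rw [PhiF, coeff_zero_eq_constantCoeff_apply, map_mul, cczC,
    ← coeff_zero_eq_constantCoeff_apply, coeff_zero_pexpL, mul_one]

-- weight class lemmas
theorem wclCK (x : K) : wcl 0 (cK K x) := wcl_C (bo_C x)

theorem wclNat (k : ℕ) : wcl 0 ((k : ℕ) : PowerSeries (LaurentSeries K)) := by
  rw [← map_natCast (PowerSeries.C (R := LaurentSeries K)) k]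
  exact wcl_C (bo_natCast k)

theorem wclQtF (hs : 2 ≤ s) {W : PowerSeries (LaurentSeries K)} (hW : wcl (-1) W) :
    wcl (-(s : ℤ) + 1) (QtF K s q W) := by
  rw [QtF]
  refine wcl.sum _ _ fun j hj => ?_
  rw [Finset.mem_Icc] at hj
  have := (wclCK (q j)).mul (hW.pow j)
  refine this.mono ?_
  have : (j : ℤ) ≤ (s : ℤ) - 1 := by omega
  omega

theorem wclQdF (hs : 2 ≤ s) {W : PowerSeries (LaurentSeries K)} (hW : wcl (-1) W) :
    wcl (-(s : ℤ) + 1) (QdF K s q W) := by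
  rw [QdF]
  refine wcl.sum _ _ fun j hj => ?_
  rw [Finset.mem_Icc] at hj
  have := (wclCK (q j)).mul ((wclNat j).mul (hW.pow j))
  refine this.mono ?_
  have : (j : ℤ) ≤ (s : ℤ) - 1 := by omega
  omega

theorem wclPF (hs : 2 ≤ s) {W : PowerSeries (LaurentSeries K)} (hW : wcl (-1) W) :
    wcl (-(s : ℤ)) (PF K s q W) := by
  rw [PF]
  refine wcl.add_ucl ?_ ?_
  · have := (wclCK (q s)).mul (hW.pow s)
    exact this.mono (by omega)
  · exact ((wclQtF hs hW).ucl.X_mul).mono (by omega)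

theorem wclAF (hs : 2 ≤ s) (hd : 1 ≤ d) {W : PowerSeries (LaurentSeries K)}
    (hW : wcl (-1) W) : wcl (-((s * d : ℕ) : ℤ)) (AF K s d q σ W) := by
  rw [AF]
  have hinner : wcl (-(s:ℤ)) (cK K (q s) * ((s : PowerSeries (LaurentSeries K)) * W ^ s) +
      PowerSeries.X * QdF K s q W) := by
    refine wcl.add_ucl ?_ ?_
    · have := (wclCK (q s)).mul ((wclNat s).mul (hW.pow s))
      exact this.mono (by omega)
    · exact ((wclQdF hs hW).ucl.X_mul).mono (by omega)
  have := (wclCK σ).mul ((wclNat d).mul (((wclPF (q := q) hs hW).pow (d-1)).mul hinner))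
  refine this.mono (le_of_eq ?_)
  have h1 : ((d - 1 : ℕ) : ℤ) = (d : ℤ) - 1 := by omega
  push_cast [h1]
  ring

theorem wclBF (hs : 2 ≤ s) (hd : 1 ≤ d) {W : PowerSeries (LaurentSeries K)}
    (hW : wcl (-1) W) : wcl (-((s * d : ℕ) : ℤ)) (BF K s d q σ W) := by
  rw [BF]
  have := (wclCK σ).mul ((wclNat d).mul (((wclPF (q := q) hs hW).pow (d-1)).mul
    (hW.mul (wclQtF (q := q) hs hW))))
  refine this.mono (le_of_eq ?_)
  have h1 : ((d - 1 : ℕ) : ℤ) = (d : ℤ) - 1 := by omega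
  push_cast [h1]
  ring

end opslemmas
section main

variable {K : Type*} [Field K] [CharZero K] {s d : ℕ} {q : ℕ → K} {σ : K}

theorem zElem_pow (k : ℕ) : zElem K ^ k = HahnSeries.single (-(k : ℤ)) (1 : K) := by
  rw [zElem, HahnSeries.single_pow, one_pow]
  congr 1
  simp

theorem natLS (k : ℕ) :
    ((k : ℕ) : LaurentSeries K) = HahnSeries.single (0 : ℤ) ((k : ℕ) : K) := by
  rw [← map_natCast (HahnSeries.C (R := K)) k, HahnSeries.C_apply]

/-- the grand constant -/
noncomputable def lamX (K : Type*) [Field K] (s d : ℕ) (q : ℕ → K) (σ : K) :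
    LaurentSeries K :=
  HahnSeries.single (-((s * d : ℕ) : ℤ)) (σ * ((d : K) * ((s : K) * q s ^ d)))

theorem gamma_ne (hs : 2 ≤ s) (hd : 1 ≤ d) (hne : σ * q s ≠ 0) :
    σ * ((d : K) * ((s : K) * q s ^ d)) ≠ 0 := by
  have h1 : σ ≠ 0 := fun h => hne (by rw [h, zero_mul])
  have h2 : q s ≠ 0 := fun h => hne (by rw [h, mul_zero])
  have h3 : (d : K) ≠ 0 := Nat.cast_ne_zero.mpr (by omega)
  have h4 : (s : K) ≠ 0 := Nat.cast_ne_zero.mpr (by omega)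
  exact mul_ne_zero h1 (mul_ne_zero h3 (mul_ne_zero h4 (pow_ne_zero d h2)))

theorem one_sub_lamX_ne (hs : 2 ≤ s) (hd : 1 ≤ d) (hne : σ * q s ≠ 0) :
    (1 : LaurentSeries K) - lamX K s d q σ ≠ 0 := by
  intro h
  have h2 := congrArg (fun x : LaurentSeries K => x.coeff (-((s * d : ℕ) : ℤ))) h
  simp only [HahnSeries.coeff_sub, lamX, HahnSeries.coeff_single_same] at h2
  rw [HahnSeries.coeff_one, if_neg (show ¬ -((s * d : ℕ) : ℤ) = 0 by
    intro hh
    rw [neg_eq_zero, Int.natCast_eq_zero] at hh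
    have := Nat.mul_pos (show 0 < s by omega) (show 0 < d by omega)
    omega)] at h2
  rw [HahnSeries.coeff_zero, zero_sub, neg_eq_zero] at h2
  exact gamma_ne hs hd hne h2

/-- the key single-identity used for the perturbation constant -/
theorem lam_single_eq (hs : 2 ≤ s) (hd : 1 ≤ d) :
    zElem K * (HahnSeries.C σ * ((d : LaurentSeries K) *
      ((HahnSeries.C (q s) * zElem K ^ s) ^ (d - 1) *
        (HahnSeries.C (q s) * ((s : LaurentSeries K) * zElem K ^ (s - 1)))))) =
      lamX K s d q σ := by
  obtain ⟨e, rfl⟩ : ∃ e, d = e + 1 := ⟨d - 1, by omega⟩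
  obtain ⟨u, rfl⟩ : ∃ u, s = u + 2 := ⟨s - 2, by omega⟩
  rw [lamX, mul_pow, ← pow_mul]
  simp only [Nat.add_sub_cancel, show u + 2 - 1 = u + 1 by omega]
  rw [show zElem K = HahnSeries.single (-1 : ℤ) (1 : K) from rfl]
  simp only [zElem_pow, HahnSeries.C_apply, natLS, HahnSeries.single_pow,
    HahnSeries.single_mul_single, one_pow, one_mul, mul_one, smul_eq_mul, nsmul_eq_mul]
  congr 1
  · push_cast
    ring
  · push_cast
    ring

theorem lam_single_eq₂ (hs : 2 ≤ s) (hd : 1 ≤ d) :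
    HahnSeries.C σ * ((d : LaurentSeries K) *
      ((HahnSeries.C (q s) * zElem K ^ s) ^ (d - 1) *
        (HahnSeries.C (q s) * ((s : LaurentSeries K) * zElem K ^ s)))) =
      lamX K s d q σ := by
  obtain ⟨e, rfl⟩ : ∃ e, d = e + 1 := ⟨d - 1, by omega⟩
  obtain ⟨u, rfl⟩ : ∃ u, s = u + 2 := ⟨s - 2, by omega⟩
  rw [lamX, mul_pow, ← pow_mul]
  simp only [Nat.add_sub_cancel]
  simp only [zElem_pow, HahnSeries.C_apply, natLS, HahnSeries.single_pow,
    HahnSeries.single_mul_single, one_pow, one_mul, mul_one, smul_eq_mul, nsmul_eq_mul]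
  congr 1
  · push_cast
    ring
  · push_cast
    ring

/-- constant coefficient of AF -/
theorem ccAF {Z : PowerSeries (LaurentSeries K)} (hs : 2 ≤ s) (hd : 1 ≤ d)
    (hZ0 : PowerSeries.constantCoeff (R := LaurentSeries K) Z = zElem K) :
    PowerSeries.constantCoeff (R := LaurentSeries K) (AF K s d q σ Z) = lamX K s d q σ := by
  have hXQd : PowerSeries.constantCoeff (R := LaurentSeries K)
      (PowerSeries.X * QdF K s q Z) = 0 := by
    rw [map_mul, PowerSeries.constantCoeff_X, zero_mul]
  simp only [AF, map_mul, map_add, map_pow, map_natCast, hXQd, add_zero, ccCK,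
    ccPF hZ0, hZ0]
  exact lam_single_eq₂ hs hd

open scoped PowerSeries in
theorem deriv_cKmul (x : LaurentSeries K) (G : PowerSeries (LaurentSeries K)) :
    d⁄dX (LaurentSeries K) (PowerSeries.C (R := LaurentSeries K) x * G) =
      PowerSeries.C (R := LaurentSeries K) x * d⁄dX (LaurentSeries K) G := by
  rw [Derivation.leibniz, PowerSeries.derivative_C, smul_zero, add_zero, smul_eq_mul]

theorem derivXpow (G : PowerSeries (LaurentSeries K)) (k : ℕ) :
    d⁄dX (LaurentSeries K) (G ^ k) =
      (k : PowerSeries (LaurentSeries K)) * (G ^ (k - 1) * d⁄dX (LaurentSeries K) G) := by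
  rw [Derivation.leibniz_pow]
  simp only [nsmul_eq_mul, smul_eq_mul]

theorem odeX (hs : 2 ≤ s) (hd : 1 ≤ d) {Z : PowerSeries (LaurentSeries K)}
    (hZ0 : PowerSeries.constantCoeff (R := LaurentSeries K) Z = zElem K)
    (hZe : Z = PhiF K s d q σ Z) :
    d⁄dX (LaurentSeries K) Z =
      d⁄dX (LaurentSeries K) Z * AF K s d q σ Z + BF K s d q σ Z := by
  haveI := lcharZero (K := K)
  have hDz : d⁄dX (LaurentSeries K) (zC K) = 0 := PowerSeries.derivative_C
  have hF0 : PowerSeries.constantCoeff (R := LaurentSeries K) (FFX K s d q σ Z) = 0 := ccFFX hZ0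
  have hZe' : Z = zC K * pexpL (LaurentSeries K) (FFX K s d q σ Z) := hZe
  have hDF : d⁄dX (LaurentSeries K) Z = d⁄dX (LaurentSeries K) (FFX K s d q σ Z) * Z := by
    conv_lhs => rw [hZe']
    rw [Derivation.leibniz, deriv_pexpL hF0, hDz, smul_zero, add_zero, smul_eq_mul]
    calc zC K * (d⁄dX (LaurentSeries K) (FFX K s d q σ Z) *
          pexpL (LaurentSeries K) (FFX K s d q σ Z))
        = d⁄dX (LaurentSeries K) (FFX K s d q σ Z) *
            (zC K * pexpL (LaurentSeries K) (FFX K s d q σ Z)) := by ring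
      _ = d⁄dX (LaurentSeries K) (FFX K s d q σ Z) * Z := by rw [← hZe']
  have hDQt : d⁄dX (LaurentSeries K) (QtF K s q Z) * Z =
      QdF K s q Z * d⁄dX (LaurentSeries K) Z := by
    rw [QtF, QdF, map_sum, Finset.sum_mul, Finset.sum_mul]
    refine Finset.sum_congr rfl fun j hj => ?_
    rw [Finset.mem_Icc] at hj
    obtain ⟨i, rfl⟩ : ∃ i, j = i + 1 := ⟨j - 1, by omega⟩
    rw [show cK K (q (i + 1)) =
      PowerSeries.C (R := LaurentSeries K) (HahnSeries.C (q (i + 1))) from rfl]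
    rw [deriv_cKmul, derivXpow]
    simp only [Nat.add_sub_cancel]
    rw [pow_succ]
    ring
  have hZpow : Z ^ (s - 1) * Z = Z ^ s := by
    conv_rhs => rw [show s = (s - 1) + 1 by omega]
    rw [pow_succ]
  have hDP : d⁄dX (LaurentSeries K) (PF K s q Z) * Z =
      (cK K (q s) * ((s : PowerSeries (LaurentSeries K)) * Z ^ s) +
        PowerSeries.X * QdF K s q Z) * d⁄dX (LaurentSeries K) Z + Z * QtF K s q Z := by
    rw [PF, map_add,
      show cK K (q s) = PowerSeries.C (R := LaurentSeries K) (HahnSeries.C (q s)) from rfl,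
      deriv_cKmul, derivXpow, Derivation.leibniz, PowerSeries.derivative_X, smul_eq_mul,
      smul_eq_mul, mul_one]
    linear_combination (PowerSeries.X : PowerSeries (LaurentSeries K)) * hDQt +
      (PowerSeries.C (R := LaurentSeries K) (HahnSeries.C (q s)) *
        (s : PowerSeries (LaurentSeries K)) * d⁄dX (LaurentSeries K) Z) * hZpow
  have hDFF : d⁄dX (LaurentSeries K) (FFX K s d q σ Z) =
      cK K σ * ((d : PowerSeries (LaurentSeries K)) *
        (PF K s q Z ^ (d - 1) * d⁄dX (LaurentSeries K) (PF K s q Z))) := by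
    rw [FFX, show cK K σ = PowerSeries.C (R := LaurentSeries K) (HahnSeries.C σ) from rfl,
      deriv_cKmul, map_sub, derivXpow]
    have hconst : d⁄dX (LaurentSeries K) (cK K (q s) ^ d * zC K ^ (s * d)) = 0 := by
      rw [show cK K (q s) ^ d * zC K ^ (s * d) =
        PowerSeries.C (R := LaurentSeries K) (HahnSeries.C (q s) ^ d * zElem K ^ (s * d)) by
          rw [map_mul, map_pow, map_pow]; rfl]
      exact PowerSeries.derivative_C
    rw [hconst, sub_zero]
  calc d⁄dX (LaurentSeries K) Z
      = d⁄dX (LaurentSeries K) (FFX K s d q σ Z) * Z := hDF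
    _ = d⁄dX (LaurentSeries K) Z * AF K s d q σ Z + BF K s d q σ Z := by
        rw [hDFF, AF, BF]
        linear_combination (cK K σ * ((d : PowerSeries (LaurentSeries K)) *
          PF K s q Z ^ (d - 1))) * hDP

end main
section main2

variable {K : Type*} [Field K] [CharZero K] {s d : ℕ} {q : ℕ → K} {σ : K}

theorem pertPhiF (hs : 2 ≤ s) (hd : 1 ≤ d) {n : ℕ} (hn : n ≠ 0)
    (W : PowerSeries (LaurentSeries K)) (a : LaurentSeries K)
    (hW : PowerSeries.constantCoeff (R := LaurentSeries K) W = zElem K) :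
    pert n (lamX K s d q σ * a) (PhiF K s d q σ W)
      (PhiF K s d q σ (W + PowerSeries.C (R := LaurentSeries K) a * PowerSeries.X ^ n)) := by
  have p1 : pert n a W (W + PowerSeries.C (R := LaurentSeries K) a * PowerSeries.X ^ n) :=
    pert.self n a W
  have pqs := pert.mul hn (pert.refl n (cK K (q s))) (p1.pow hn s)
  have pQt := pert.sum (Finset.Icc 1 (s-1)) _ _ _
    (fun j (_ : j ∈ Finset.Icc 1 (s-1)) =>
      pert.mul hn (pert.refl n (cK K (q j))) (p1.pow hn j))
  have pP := pqs.add pQt.X_mul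
  have pPd := pP.pow hn d
  have psub := pPd.sub_const (cK K (q s) ^ d * zC K ^ (s * d))
  have pF := pert.mul hn (pert.refl n (cK K σ)) psub
  have hWF0 : PowerSeries.constantCoeff (R := LaurentSeries K)
      (cK K σ * ((cK K (q s) * W ^ s +
        PowerSeries.X * ∑ j ∈ Finset.Icc 1 (s-1), cK K (q j) * W ^ j) ^ d -
        cK K (q s) ^ d * zC K ^ (s * d))) = 0 := ccFFX hW
  have pE := pF.pexp hn hWF0
  have pΦ := pert.mul hn (pert.refl n (zC K)) pE
  have hccP : PowerSeries.constantCoeff (R := LaurentSeries K)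
      (cK K (q s) * W ^ s +
        PowerSeries.X * ∑ j ∈ Finset.Icc 1 (s-1), cK K (q j) * W ^ j) =
      HahnSeries.C (q s) * zElem K ^ s := ccPF hW
  simp only [ccCK, cczC, hW, hccP, zero_mul, zero_add, add_zero, mul_zero] at pΦ
  unfold PhiF FFX PF QtF
  convert pΦ using 1
  rw [← lam_single_eq hs hd]
  ring

theorem exunX (hs : 2 ≤ s) (hd : 1 ≤ d) (hne : σ * q s ≠ 0) :
    ∃! Z : PowerSeries (LaurentSeries K),
      PowerSeries.constantCoeff (R := LaurentSeries K) Z = zElem K ∧ Z = PhiF K s d q σ Z := by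
  haveI := lcharZero (K := K)
  exact fixed_point_exists_unique (one_sub_lamX_ne hs hd hne)
    (fun n W W' h => agreePhiF h) (fun W => coeff0PhiF W)
    (fun n hn W a hW => pertPhiF hs hd hn W a hW)

theorem integrX (hs : 2 ≤ s) (hd : 1 ≤ d) (hne : σ * q s ≠ 0)
    {Z : PowerSeries (LaurentSeries K)}
    (hZ0 : PowerSeries.constantCoeff (R := LaurentSeries K) Z = zElem K)
    (hZe : Z = PhiF K s d q σ Z) (l : ℕ) :
    PowerSeries.coeff (R := LaurentSeries K) l (Z - zC K) ∈
      Set.range (HahnSeries.ofPowerSeries ℤ K) := by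
  haveI := lcharZero (K := K)
  have hODE := odeX hs hd hZ0 hZe
  set A0 := PowerSeries.constantCoeff (R := LaurentSeries K) (AF K s d q σ Z) with hA0def
  have hA0 : A0 = lamX K s d q σ := ccAF hs hd hZ0
  have hsd0 : ¬ -((s * d : ℕ) : ℤ) = 0 := by
    intro hh
    rw [neg_eq_zero, Int.natCast_eq_zero] at hh
    have := Nat.mul_pos (show 0 < s by omega) (show 0 < d by omega)
    omega
  have h1A0 : (1 : LaurentSeries K) - A0 ≠ 0 := by
    rw [hA0]; exact one_sub_lamX_ne hs hd hne
  have hordA0 : ((1 : LaurentSeries K) - A0).order ≤ -((s * d : ℕ) : ℤ) := by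
    refine order_le_of_coeff_ne_zero ?_
    rw [hA0]
    rw [HahnSeries.coeff_sub, HahnSeries.coeff_one, if_neg hsd0]
    simp only [lamX, HahnSeries.coeff_single_same]
    rw [zero_sub, neg_ne_zero]
    exact gamma_ne hs hd hne
  have key : ∀ n : ℕ, n ≠ 0 → bo 0 (PowerSeries.coeff (R := LaurentSeries K) n Z) := by
    intro n
    induction n using Nat.strong_induction_on with
    | _ n ih =>
    intro hn
    have hYn : wcl (-1) (ptrunc n Z) := by
      constructor
      · rw [ptrunc, coeff_mk, if_pos (by omega), coeff_zero_eq_constantCoeff_apply, hZ0]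
        exact bo_single (-1) 1
      · intro m hm
        rw [ptrunc, coeff_mk]
        by_cases hmn : m < n
        · rw [if_pos hmn]
          exact (ih m hmn hm).mono (by omega)
        · rw [if_neg hmn]
          exact bo_zero _
    have hagr : agree (n-1) Z (ptrunc n Z) := by
      intro m hm
      rw [ptrunc, coeff_mk, if_pos (by omega)]
    have hext := congrArg (PowerSeries.coeff (R := LaurentSeries K) (n-1)) hODE
    rw [map_add] at hext
    have hsplit : PowerSeries.coeff (R := LaurentSeries K) (n-1)
          (d⁄dX (LaurentSeries K) Z * AF K s d q σ Z) =
        PowerSeries.coeff (R := LaurentSeries K) (n-1)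
          (d⁄dX (LaurentSeries K) Z *
            (AF K s d q σ Z - PowerSeries.C (R := LaurentSeries K) A0)) +
          PowerSeries.coeff (R := LaurentSeries K) (n-1) (d⁄dX (LaurentSeries K) Z) * A0 := by
      have hX : d⁄dX (LaurentSeries K) Z * AF K s d q σ Z =
          d⁄dX (LaurentSeries K) Z *
            (AF K s d q σ Z - PowerSeries.C (R := LaurentSeries K) A0) +
          PowerSeries.C (R := LaurentSeries K) A0 * d⁄dX (LaurentSeries K) Z := by
        ring
      rw [hX, map_add, PowerSeries.coeff_C_mul]
      ring
    have heq : PowerSeries.coeff (R := LaurentSeries K) (n-1) (d⁄dX (LaurentSeries K) Z) *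
          (1 - A0) =
        PowerSeries.coeff (R := LaurentSeries K) (n-1)
          (d⁄dX (LaurentSeries K) Z *
            (AF K s d q σ Z - PowerSeries.C (R := LaurentSeries K) A0)) +
          PowerSeries.coeff (R := LaurentSeries K) (n-1) (BF K s d q σ Z) := by
      linear_combination hext + hsplit
    have hder : PowerSeries.coeff (R := LaurentSeries K) (n-1) (d⁄dX (LaurentSeries K) Z) =
        PowerSeries.coeff (R := LaurentSeries K) n Z * ((n : ℕ) : LaurentSeries K) := by
      rw [PowerSeries.coeff_derivative, show n - 1 + 1 = n by omega]
      congr 1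
      push_cast [Nat.cast_sub (show 1 ≤ n by omega)]
      ring
    rw [hder] at heq
    have hn0 : ((n : ℕ) : LaurentSeries K) ≠ 0 := Nat.cast_ne_zero.mpr hn
    have hprod_ne : ((n : ℕ) : LaurentSeries K) * (1 - A0) ≠ 0 := mul_ne_zero hn0 h1A0
    have hval : PowerSeries.coeff (R := LaurentSeries K) n Z =
        (PowerSeries.coeff (R := LaurentSeries K) (n-1)
          (d⁄dX (LaurentSeries K) Z *
            (AF K s d q σ Z - PowerSeries.C (R := LaurentSeries K) A0)) +
          PowerSeries.coeff (R := LaurentSeries K) (n-1) (BF K s d q σ Z)) *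
            (((n : ℕ) : LaurentSeries K) * (1 - A0))⁻¹ := by
      rw [eq_mul_inv_iff_mul_eq₀ hprod_ne]
      linear_combination heq
    rw [hval]
    have hb1 : bo (-((s * d : ℕ) : ℤ)) (PowerSeries.coeff (R := LaurentSeries K) (n-1)
        (d⁄dX (LaurentSeries K) Z *
          (AF K s d q σ Z - PowerSeries.C (R := LaurentSeries K) A0))) := by
      rw [PowerSeries.coeff_mul]
      refine bo.sum _ _ fun p hp => ?_
      rw [Finset.HasAntidiagonal.mem_antidiagonal] at hp
      by_cases hq0 : p.2 = 0
      · have hz : PowerSeries.coeff (R := LaurentSeries K) p.2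
            (AF K s d q σ Z - PowerSeries.C (R := LaurentSeries K) A0) = 0 := by
          rw [hq0, map_sub, coeff_zero_eq_constantCoeff_apply,
            coeff_zero_eq_constantCoeff_apply, PowerSeries.constantCoeff_C, ← hA0def,
            sub_self]
        rw [hz, mul_zero]
        exact bo_zero _
      · have hA'q : PowerSeries.coeff (R := LaurentSeries K) p.2
            (AF K s d q σ Z - PowerSeries.C (R := LaurentSeries K) A0) =
            PowerSeries.coeff (R := LaurentSeries K) p.2 (AF K s d q σ (ptrunc n Z)) := by
          rw [map_sub, PowerSeries.coeff_C, if_neg hq0, sub_zero]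
          exact (agreeAF hagr) p.2 (by omega)
        have hbA := (wclAF (q := q) (σ := σ) hs hd hYn).2 p.2 hq0
        have hbD : bo 0 (PowerSeries.coeff (R := LaurentSeries K) p.1
            (d⁄dX (LaurentSeries K) Z)) := by
          rw [PowerSeries.coeff_derivative]
          have hc : ((p.1 : LaurentSeries K) + 1) =
              (((p.1 + 1 : ℕ)) : LaurentSeries K) := by push_cast; ring
          rw [hc]
          exact (bo.mul (ih (p.1+1) (by omega) (by omega)) (bo_natCast _)).mono (by omega)
        rw [hA'q]
        exact (hbD.mul hbA).mono (by omega)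
    have hb2 : bo (-((s * d : ℕ) : ℤ))
        (PowerSeries.coeff (R := LaurentSeries K) (n-1) (BF K s d q σ Z)) := by
      rw [(agreeBF hagr) (n-1) (le_refl _)]
      exact (wclBF (q := q) (σ := σ) hs hd hYn).ucl (n-1)
    have hb3 : bo (((s * d : ℕ) : ℤ))
        ((((n : ℕ) : LaurentSeries K) * (1 - A0))⁻¹) := by
      have horder : (((n : ℕ) : LaurentSeries K) * (1 - A0)).order ≤ -((s * d : ℕ) : ℤ) := by
        rw [HahnSeries.order_mul hn0 h1A0]
        have hordn : ((n : ℕ) : LaurentSeries K).order = 0 := by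
          rw [← map_natCast (HahnSeries.C (R := K)) n]
          exact HahnSeries.order_C
        rw [hordn, zero_add]
        exact hordA0
      have := bo_inv hprod_ne horder
      simpa using this
    exact ((hb1.add hb2).mul hb3).mono (by omega)
  rcases Nat.eq_zero_or_pos l with rfl | hl
  · have hc : PowerSeries.coeff (R := LaurentSeries K) 0 (Z - zC K) = 0 := by
      rw [map_sub, coeff_zero_eq_constantCoeff_apply, coeff_zero_eq_constantCoeff_apply,
        hZ0, cczC, sub_self]
    rw [hc]
    exact ⟨0, map_zero _⟩
  · have hc : PowerSeries.coeff (R := LaurentSeries K) l (Z - zC K) =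
        PowerSeries.coeff (R := LaurentSeries K) l Z := by
      rw [map_sub, zC, PowerSeries.coeff_C, if_neg (by omega), sub_zero]
    rw [hc]
    exact mem_range_ofPowerSeries (key l (by omega))

end main2
theorem statement8 (K : Type*) [Field K] [CharZero K] (s d : ℕ) (hs : 2 ≤ s) (hd : 1 ≤ d)
    (q : ℕ → K) (σ : K) (hne : σ * q s ≠ 0) :
    -- `Q̃(Y) = Σ_{j=1}^{s−1} q_j Y^j`, evaluated on elements of `R = L⟦t⟧`:
    let L := LaurentSeries K
    let z : PowerSeries L := PowerSeries.C (R := L) (zElem K)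
    let Qt : PowerSeries L → PowerSeries L :=
      fun Y => ∑ j ∈ Finset.Icc 1 (s - 1), cK K (q j) * Y ^ j
    let SatEq : PowerSeries L → Prop := fun Z =>
      PowerSeries.constantCoeff (R := L) Z = zElem K ∧
        Z = z * pexpL L
          (cK K σ *
            ((cK K (q s) * Z ^ s + PowerSeries.X * Qt Z) ^ d - cK K (q s) ^ d * z ^ (s * d)))
    (∃! Z : PowerSeries L, SatEq Z) ∧
      ∀ Z : PowerSeries L, SatEq Z → ∀ l : ℕ,
        PowerSeries.coeff (R := L) l (Z - z) ∈ Set.range (HahnSeries.ofPowerSeries ℤ K) := by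
  intro L z Qt Sat
  change (∃! Z : PowerSeries (LaurentSeries K),
      PowerSeries.constantCoeff (R := LaurentSeries K) Z = zElem K ∧ Z = PhiF K s d q σ Z) ∧
    ∀ Z : PowerSeries (LaurentSeries K),
      (PowerSeries.constantCoeff (R := LaurentSeries K) Z = zElem K ∧ Z = PhiF K s d q σ Z) →
      ∀ l : ℕ, PowerSeries.coeff (R := LaurentSeries K) l (Z - zC K) ∈
        Set.range (HahnSeries.ofPowerSeries ℤ K)
  exact ⟨exunX hs hd hne, fun Z hZ l => integrX hs hd hne hZ.1 hZ.2 l⟩
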